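/- arXiv:1208.1595 — 3 statements merged into one kernel-verified Lean document; each statement's English description precedes it below -/
import Mathlib

section
/- Let α be a type and let R_s, R_w, S_s, S_w be binary relations on α. If the relation (R_s ∪ S_s) ∘ (R_w ∪ S_w)* is strongly normalizing and the relation R_w ∘ S_w* is strongly normalizing, then the relation (R_s ∪ R_w) ∘ (S_s ∪ S_w)* is strongly normalizing. (Equivalently: relative termination of (R_s ∪ S_s)/(R_w ∪ S_w) together with relative termination of R_w/S_w implies relative termination of (R_s ∪ R_w)/(S_s ∪ S_w).) -/
/-- `T` is strongly normalizing: no infinite `T`-sequence. -/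
def SN {α : Type*} (T : α → α → Prop) : Prop :=
  ¬ ∃ f : ℕ → α, ∀ i, T (f i) (f (i + 1))

/-- `T` is strongly normalizing at `a`: no infinite `T`-sequence starting in `a`. -/
def SNAt {α : Type*} (T : α → α → Prop) (a : α) : Prop :=
  ¬ ∃ f : ℕ → α, f 0 = a ∧ ∀ i, T (f i) (f (i + 1))

/-- Minimal infinite standard DP `(P,R)`-chain given by sequences `a b : ℕ → α`. -/
def MinChain {α : Type*} (P R : α → α → Prop) (a b : ℕ → α) : Prop :=
  (∀ i, P (a i) (b i)) ∧
  (∀ i, Relation.ReflTransGen R (b i) (a (i + 1))) ∧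
  (∀ i, SNAt R (b i))

/-- The standard DP problem `(P,R)` is finite: there is no minimal infinite chain. -/
def DPFinite {α : Type*} (P R : α → α → Prop) : Prop :=
  ¬ ∃ a b : ℕ → α, MinChain P R a b

/-- Minimal infinite relative DP `(P,Pw,R,Rw)`-chain given by sequences `a b : ℕ → α`. -/
def MinRelChain {α : Type*} (P Pw R Rw : α → α → Prop) (a b : ℕ → α) : Prop :=
  (∀ i, (P ⊔ Pw) (a i) (b i)) ∧
  (∀ i, Relation.ReflTransGen (R ⊔ Rw) (b i) (a (i + 1))) ∧
  (∀ N, ∃ i, N ≤ i ∧ (P (a i) (b i) ∨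
    ∃ u v, Relation.ReflTransGen (R ⊔ Rw) (b i) u ∧ R u v ∧
      Relation.ReflTransGen (R ⊔ Rw) v (a (i + 1)))) ∧
  (∀ i, SNAt (R ⊔ Rw) (b i))

/-- The relative DP problem `(P,Pw,R,Rw)` is finite: no minimal infinite chain. -/
def RelDPFinite {α : Type*} (P Pw R Rw : α → α → Prop) : Prop :=
  ¬ ∃ a b : ℕ → α, MinRelChain P Pw R Rw a b

open Relation

lemma chain_of_rtg {α : Type*} {R : α → α → Prop} {a b : α} (h : ReflTransGen R a b) :
    ∃ n, ∃ c : ℕ → α, c 0 = a ∧ c n = b ∧ ∀ j < n, R (c j) (c (j+1)) := by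
  induction h with
  | refl => exact ⟨0, fun _ => a, rfl, rfl, fun j hj => absurd hj (by omega)⟩
  | @tail b' c' hab hbc ih =>
    obtain ⟨n, c, h0, hn, hs⟩ := ih
    refine ⟨n+1, fun j => if j ≤ n then c j else c', by simpa using h0, by simp, ?_⟩
    intro j hj
    rcases Nat.lt_or_ge j n with hjn | hjn
    · simpa [Nat.le_of_lt hjn, Nat.succ_le_of_lt hjn] using hs j hjn
    · have : j = n := by omega
      subst this
      simpa [hn] using hbc

lemma rtg_of_chain {α : Type*} {R : α → α → Prop} (c : ℕ → α) :
    ∀ a b, a ≤ b → (∀ k, a ≤ k → k < b → R (c k) (c (k+1))) →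
    ReflTransGen R (c a) (c b) := by
  intro a b hab
  induction b, hab using Nat.le_induction with
  | base => intro _; exact .refl
  | succ b hab ih =>
    intro hs
    exact (ih fun k hk hk2 => hs k hk (by omega)).tail (hs b hab (by omega))

lemma exists_strong_subseq (r : ℕ → Prop) (hr : ∀ N, ∃ k, N ≤ k ∧ r k) :
    ∃ e : ℕ → ℕ, (∀ n, r (e n)) ∧ (∀ n, e n < e (n+1)) ∧
      ∀ n j, e n < j → j < e (n+1) → ¬ r j := by
  classical
  let e : ℕ → ℕ := fun n => Nat.rec (Nat.find (hr 0)) (fun _ prev => Nat.find (hr (prev+1))) n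
  have he0 : ∀ n, e (n+1) = Nat.find (hr (e n + 1)) := fun n => rfl
  refine ⟨e, ?_, ?_, ?_⟩
  · intro n
    cases n with
    | zero => exact (Nat.find_spec (hr 0)).2
    | succ n => rw [he0]; exact (Nat.find_spec (hr (e n + 1))).2
  · intro n
    rw [he0]
    have := (Nat.find_spec (hr (e n + 1))).1
    omega
  · intro n j h1 h2 hrj
    rw [he0] at h2
    exact absurd ⟨by omega, hrj⟩ (Nat.find_min (hr (e n + 1)) h2)


/-- Geser's split: relative termination of `(Rs ∪ Ss) / (Rw ∪ Sw)` and of `Rw / Sw`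
implies relative termination of `(Rs ∪ Rw) / (Ss ∪ Sw)`. -/
theorem split_relative_termination {α : Type*} (Rs Rw Ss Sw : α → α → Prop)
    (h1 : SN (Relation.Comp (Rs ⊔ Ss) (Relation.ReflTransGen (Rw ⊔ Sw))))
    (h2 : SN (Relation.Comp Rw (Relation.ReflTransGen Sw))) :
    SN (Relation.Comp (Rs ⊔ Rw) (Relation.ReflTransGen (Ss ⊔ Sw))) := by
  classical
  rintro ⟨f, hf⟩
  choose g hg1 hg2 using hf
  choose n c hc0 hcn hcs using fun i => chain_of_rtg (hg2 i)
  -- block i : positions 0 .. m i, d i 0 = f i, d i (m i) = f (i+1)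
  set m : ℕ → ℕ := fun i => n i + 1 with hm
  have hm1 : ∀ i', m i' = n i' + 1 := fun _ => rfl
  have hmpos : ∀ i', 1 ≤ m i' := fun i' => by rw [hm1]; omega
  set d : ℕ → ℕ → α := fun i j => if j = 0 then f i else c i (j - 1) with hd
  have hd0 : ∀ i, d i 0 = f i := fun i => rfl
  have hd1 : ∀ i, d i 1 = g i := by intro i; simp [hd, hc0]
  have hdm : ∀ i, d i (m i) = f (i+1) := by intro i; simp [hd, hm, hcn]
  have hstep0 : ∀ i, (Rs (d i 0) (d i 1) ∨ Rw (d i 0) (d i 1)) := by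
    intro i
    rw [hd0, hd1]
    simpa [Pi.sup_apply, sup_Prop_eq] using hg1 i
  have hstep1 : ∀ i j, 0 < j → j < m i →
      (Ss (d i j) (d i (j+1)) ∨ Sw (d i j) (d i (j+1))) := by
    intro i j hj hjm
    have h := hcs i (j-1) (by have := hm1 i; omega)
    have e1 : d i j = c i (j - 1) := by simp [hd, Nat.pos_iff_ne_zero.mp hj]
    have e2 : d i (j+1) = c i j := by simp [hd]
    rw [e1, e2]
    have : j - 1 + 1 = j := by omega
    rw [this] at h
    simpa [Pi.sup_apply, sup_Prop_eq] using h
  -- offsets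
  set off : ℕ → ℕ := fun i => Nat.rec 0 (fun i' acc => acc + m i') i with hoff
  have hoffs : ∀ i, off (i+1) = off i + m i := fun i => rfl
  have hoff0 : off 0 = 0 := rfl
  have hoffge : ∀ i, i ≤ off i := by
    intro i
    induction i with
    | zero => omega
    | succ i ih => rw [hoffs]; have := hmpos i; omega
  have hoffmono : ∀ i i', i ≤ i' → off i ≤ off i' := by
    intro i i' h
    induction i', h using Nat.le_induction with
    | base => exact le_rfl
    | succ i' _ ih => rw [hoffs]; omega
  have hex : ∀ k, ∃ i, k < off (i+1) := by
    intro k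
    exact ⟨k, by have := hoffge (k+1); omega⟩
  set blk : ℕ → ℕ := fun k => Nat.find (hex k) with hblk
  have hblk1 : ∀ k, k < off (blk k + 1) := fun k => Nat.find_spec (hex k)
  have hblk2 : ∀ k, off (blk k) ≤ k := by
    intro k
    rcases Nat.eq_zero_or_pos (blk k) with h | h
    · rw [h, hoff0]; omega
    · have := Nat.find_min (hex k) (m := blk k - 1) (show blk k - 1 < blk k by omega)
      have e : blk k - 1 + 1 = blk k := by omega
      rw [e] at this
      omega
  have hblk_eq : ∀ k i, off i ≤ k → k < off (i+1) → blk k = i := by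
    intro k i hik hik2
    have h1 : blk k ≤ i := Nat.find_min' (hex k) hik2
    rcases Nat.lt_or_ge (blk k) i with h | h
    · have := hoffmono (blk k + 1) i (by omega)
      have := hblk1 k
      omega
    · omega
  set h : ℕ → α := fun k => d (blk k) (k - off (blk k)) with hh
  have hval : ∀ i j, j ≤ m i → h (off i + j) = d i j := by
    intro i j hj
    rcases Nat.lt_or_ge j (m i) with hj' | hj'
    · have hb : blk (off i + j) = i :=
        hblk_eq _ _ (by omega) (by rw [hoffs]; have := hmpos i; omega)
      simp [hh, hb]
    · have hjm : j = m i := by omega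
      subst hjm
      have e : off i + m i = off (i+1) := (hoffs i).symm
      rw [e]
      have hb : blk (off (i+1)) = i + 1 :=
        hblk_eq _ _ le_rfl (by rw [hoffs (i+1)]; have := hmpos (i+1); omega)
      simp [hh, hb, hd0, hdm]
  -- decomposition of any position
  have hpos : ∀ k, ∃ i j, k = off i + j ∧ j < m i := by
    intro k
    exact ⟨blk k, k - off (blk k), by have := hblk2 k; omega,
      by have := hblk1 k; rw [hoffs] at this; have := hblk2 k; omega⟩
  -- Strong predicate
  set Str : ℕ → Prop := fun k =>
    ∃ i j, k = off i + j ∧ j < m i ∧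
      ((j = 0 ∧ Rs (d i 0) (d i 1)) ∨ (0 < j ∧ Ss (d i j) (d i (j+1)))) with hStr
  -- steps
  have hstepS : ∀ k, Str k → (Rs ⊔ Ss) (h k) (h (k+1)) := by
    rintro k ⟨i, j, rfl, hjm, hcase⟩
    have e1 : h (off i + j) = d i j := hval i j (by omega)
    have e2 : h (off i + j + 1) = d i (j+1) := by
      have : off i + j + 1 = off i + (j+1) := by omega
      rw [this]; exact hval i (j+1) (by omega)
    rw [e1, e2]
    rcases hcase with ⟨hj0, hr⟩ | ⟨hj0, hr⟩
    · subst hj0; exact Or.inl hr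
    · exact Or.inr hr
  have hstepW : ∀ k, ¬ Str k →
      ∃ i j, k = off i + j ∧ j < m i ∧
        ((j = 0 ∧ Rw (h k) (h (k+1))) ∨ (0 < j ∧ Sw (h k) (h (k+1)))) := by
    intro k hk
    obtain ⟨i, j, rfl, hjm⟩ := hpos k
    have e1 : h (off i + j) = d i j := hval i j (by omega)
    have e2 : h (off i + j + 1) = d i (j+1) := by
      have : off i + j + 1 = off i + (j+1) := by omega
      rw [this]; exact hval i (j+1) (by omega)
    refine ⟨i, j, rfl, hjm, ?_⟩
    rcases Nat.eq_zero_or_pos j with hj0 | hj0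
    · subst hj0
      left
      refine ⟨rfl, ?_⟩
      rcases hstep0 i with hr | hr
      · exact absurd ⟨i, 0, rfl, hjm, Or.inl ⟨rfl, hr⟩⟩ hk
      · rw [e1, e2]; exact hr
    · right
      refine ⟨hj0, ?_⟩
      rcases hstep1 i j hj0 hjm with hr | hr
      · exact absurd ⟨i, j, rfl, hjm, Or.inr ⟨hj0, hr⟩⟩ hk
      · rw [e1, e2]; exact hr
  have hstepW' : ∀ k, ¬ Str k → (Rw ⊔ Sw) (h k) (h (k+1)) := by
    intro k hk
    obtain ⟨i, j, _, _, h'⟩ := hstepW k hk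
    rcases h' with ⟨_, hr⟩ | ⟨_, hr⟩
    · exact Or.inl hr
    · exact Or.inr hr
  by_cases hcase : ∀ N, ∃ k, N ≤ k ∧ Str k
  · -- infinitely many strong steps: contradict h1
    obtain ⟨e, he1, he2, he3⟩ := exists_strong_subseq Str hcase
    refine h1 ⟨fun l => h (e l), fun l => ?_⟩
    refine ⟨h (e l + 1), hstepS (e l) (he1 l), ?_⟩
    exact rtg_of_chain h (e l + 1) (e (l+1)) (he2 l) fun k hk hk2 =>
      hstepW' k (he3 l k (by omega) hk2)
  · -- eventually weak: contradict h2
    push_neg at hcase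
    obtain ⟨N, hN⟩ := hcase
    refine h2 ⟨fun l => f (N + l), fun l => ?_⟩
    set i := N + l with hi
    have hNi : N ≤ i := by omega
    have hoffN : N ≤ off i := le_trans hNi (hoffge i)
    have hnostr : ∀ k, off i ≤ k → ¬ Str k := fun k hk => hN k (by omega)
    -- head step
    have hhead : Rw (f i) (g i) := by
      obtain ⟨i', j', he', hjm', h'⟩ := hstepW (off i) (hnostr _ le_rfl)
      have hbi : blk (off i) = i := hblk_eq _ _ le_rfl (by rw [hoffs]; have := hmpos i; omega)
      have hbi' : blk (off i) = i' := by
        apply hblk_eq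
        · omega
        · rw [hoffs]; have := hmpos i'; omega
      have hii' : i = i' := hbi.symm.trans hbi'
      subst hii'
      have hj0 : j' = 0 := by omega
      subst hj0
      rcases h' with ⟨_, hr⟩ | ⟨hpos', _⟩
      · have e1 : h (off i) = f i := by
          have := hval i 0 (by omega); simpa [hd0] using this
        have e2 : h (off i + 1) = g i := by
          have := hval i 1 (hmpos i); simpa [hd1] using this
        rw [← e1, ← e2]
        simpa using hr
      · omega
    -- tail: Sw chain from g i to f (i+1)
    have htail : ReflTransGen Sw (g i) (f (i+1)) := by
      have e1 : h (off i + 1) = g i := by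
        have := hval i 1 (hmpos i); simpa [hd1] using this
      have e2 : h (off (i+1)) = f (i+1) := by
        have := hval i (m i) le_rfl
        rw [← hoffs]  at this
        simpa [hdm] using this
      rw [← e1, ← e2]
      refine rtg_of_chain h (off i + 1) (off (i+1)) (by rw [hoffs]; have := hmpos i; omega) ?_
      intro k hk hk2
      obtain ⟨i', j', he', hjm', h'⟩ := hstepW k (hnostr k (by omega))
      have hbi' : blk k = i' := by
        apply hblk_eq
        · omega
        · rw [hoffs]; have := hmpos i'; omega
      have hbi : blk k = i := by
        apply hblk_eq
        · omega
        · rw [hoffs] at hk2 ⊢; omega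
      have hii' : i = i' := hbi.symm.trans hbi'
      subst hii'
      have hj0 : 0 < j' := by rw [hoffs] at hk2; omega
      rcases h' with ⟨hz, _⟩ | ⟨_, hr⟩
      · omega
      · exact hr
    exact ⟨g i, hhead, htail⟩
end

section
/- Soundness of the split processor: let α be a type and let P¹ₛ, P¹w, P²ₛ, P²w, R¹ₛ, R¹w, R²ₛ, R²w be binary relations on α. If the relative DP problem (P¹ₛ ∪ P²ₛ, P¹w ∪ P²w, R¹ₛ ∪ R²ₛ, R¹w ∪ R²w) is finite and the relative DP problem (P¹w, P²w, R¹w, R²w) is finite, then the relative DP problem (P¹ₛ ∪ P¹w, P²ₛ ∪ P²w, R¹ₛ ∪ R¹w, R²ₛ ∪ R²w) is finite. -/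
private lemma weak_path {α : Type*} {A B C : α → α → Prop}
    (hsub : ∀ p q, C p q → A p q ∨ B p q) {x y : α}
    (h : Relation.ReflTransGen C x y)
    (hn : ∀ u v, Relation.ReflTransGen C x u → A u v →
      Relation.ReflTransGen C v y → False) :
    Relation.ReflTransGen B x y := by
  induction h using Relation.ReflTransGen.head_induction_on with
  | refl => exact Relation.ReflTransGen.refl
  | head h' h ih =>
    rename_i p q
    rcases hsub _ _ h' with hA | hB
    · exact absurd trivial (fun _ => hn p q Relation.ReflTransGen.refl hA h)
    · exact Relation.ReflTransGen.head hB
        (ih (fun u v hu hA hv => hn u v (Relation.ReflTransGen.head h' hu) hA hv))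

/-- Soundness of the split processor. -/
theorem split_processor_sound {α : Type*}
    (P1s P1w P2s P2w R1s R1w R2s R2w : α → α → Prop)
    (h1 : RelDPFinite (P1s ⊔ P2s) (P1w ⊔ P2w) (R1s ⊔ R2s) (R1w ⊔ R2w))
    (h2 : RelDPFinite P1w P2w R1w R2w) :
    RelDPFinite (P1s ⊔ P1w) (P2s ⊔ P2w) (R1s ⊔ R1w) (R2s ⊔ R2w) := by
  rintro ⟨a, b, hpair, hrw, hstrict, hsn⟩
  set All : α → α → Prop := (R1s ⊔ R1w) ⊔ (R2s ⊔ R2w) with hAll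
  -- all rule unions are extensionally the same
  have hAllto : ∀ p q, All p q → ((R1s ⊔ R2s) ⊔ (R1w ⊔ R2w)) p q := by
    rintro p q ((h | h) | (h | h))
    · exact Or.inl (Or.inl h)
    · exact Or.inr (Or.inl h)
    · exact Or.inl (Or.inr h)
    · exact Or.inr (Or.inr h)
  have hAllfrom : ∀ p q, ((R1s ⊔ R2s) ⊔ (R1w ⊔ R2w)) p q → All p q := by
    rintro p q ((h | h) | (h | h))
    · exact Or.inl (Or.inl h)
    · exact Or.inr (Or.inl h)
    · exact Or.inl (Or.inr h)
    · exact Or.inr (Or.inr h)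
  have hWto : ∀ p q, (R1w ⊔ R2w) p q → All p q := by
    rintro p q (h | h)
    · exact Or.inl (Or.inr h)
    · exact Or.inr (Or.inr h)
  -- strictness predicate for problem 1
  set S : ℕ → Prop := fun i =>
    ((P1s ⊔ P2s) (a i) (b i) ∨
      ∃ u v, Relation.ReflTransGen All (b i) u ∧ (R1s ⊔ R2s) u v ∧
        Relation.ReflTransGen All v (a (i + 1))) with hS
  by_cases hc : ∀ N, ∃ i, N ≤ i ∧ S i
  · -- case 1: infinitely many strict-wrt-problem-1 positions
    apply h1
    refine ⟨a, b, ?_, ?_, ?_, ?_⟩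
    · intro i
      rcases hpair i with (h | h) | (h | h)
      · exact Or.inl (Or.inl h)
      · exact Or.inr (Or.inl h)
      · exact Or.inl (Or.inr h)
      · exact Or.inr (Or.inr h)
    · intro i; exact Relation.ReflTransGen.mono (fun p q h => hAllto p q h) _ _ (hrw i)
    · intro N
      obtain ⟨i, hNi, hSi⟩ := hc N
      refine ⟨i, hNi, ?_⟩
      rcases hSi with h | ⟨u, v, h1', h2', h3'⟩
      · exact Or.inl h
      · exact Or.inr ⟨u, v, Relation.ReflTransGen.mono hAllto _ _ h1', h2', Relation.ReflTransGen.mono hAllto _ _ h3'⟩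
    · rintro i ⟨f, h0, hf⟩
      exact hsn i ⟨f, h0, fun j => hAllfrom _ _ (hf j)⟩
  · -- case 2: from some N on, nothing strict for problem 1
    push_neg at hc
    obtain ⟨N, hN⟩ := hc
    apply h2
    refine ⟨fun i => a (i + N), fun i => b (i + N), ?_, ?_, ?_, ?_⟩
    · intro i
      have hns := hN (i + N) (Nat.le_add_left _ _)
      rcases hpair (i + N) with (h | h) | (h | h)
      · exact absurd (Or.inl (Or.inl h)) hns
      · exact Or.inl h
      · exact absurd (Or.inl (Or.inr h)) hns
      · exact Or.inr h
    · intro i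
      have hns := hN (i + N) (Nat.le_add_left _ _)
      show Relation.ReflTransGen (R1w ⊔ R2w) (b (i + N)) (a (i + 1 + N))
      rw [show i + 1 + N = i + N + 1 from by omega]
      exact weak_path hAllto (hrw (i + N))
        (fun u v hu hA hv => hns (Or.inr ⟨u, v, hu, hA, hv⟩))
    · intro M
      obtain ⟨j, hj, hw⟩ := hstrict (M + N)
      refine ⟨j - N, by omega, ?_⟩
      have hns := hN j (by omega)
      show P1w (a (j - N + N)) (b (j - N + N)) ∨
        ∃ u v, Relation.ReflTransGen (R1w ⊔ R2w) (b (j - N + N)) u ∧ R1w u v ∧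
          Relation.ReflTransGen (R1w ⊔ R2w) v (a (j - N + 1 + N))
      rw [show j - N + N = j from by omega, show j - N + 1 + N = j + 1 from by omega]
      rcases hw with (hs | hwk) | ⟨u, v, hu, hs | hwstep, hv⟩
      · exact absurd (Or.inl (Or.inl hs)) hns
      · exact Or.inl hwk
      · exact absurd (Or.inr ⟨u, v, hu, Or.inl hs, hv⟩) hns
      · refine Or.inr ⟨u, v,
          weak_path hAllto hu (fun u' v' hu' hA' hv' => hns (Or.inr ⟨u', v', hu', hA',
            hv'.trans (Relation.ReflTransGen.head (hWto _ _ (Or.inl hwstep)) hv)⟩)),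
          hwstep,
          weak_path hAllto hv (fun u' v' hu' hA' hv' => hns (Or.inr ⟨u', v',
            hu.trans (Relation.ReflTransGen.head (hWto _ _ (Or.inl hwstep)) hu'), hA', hv'⟩))⟩
    · rintro i ⟨f, h0, hf⟩
      exact hsn (i + N) ⟨f, h0, fun j => hWto _ _ (hf j)⟩
end

section
/- Split of a standard DP problem: let α be a type and let P, P', R, R' be binary relations on α with P' ≤ P and R' ≤ R (P' and R' are subrelations of P and R). If the relative DP problem (P', P \ P', R', R \ R') is finite and the relative DP problem (P \ P', ⊥, ⊥, R \ R') is finite, then the relative DP problem (P, ⊥, ⊥, R) is finite (here ⊥ is the empty relation and P \ P' denotes the relation holding exactly where P holds but P' does not). -/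
section Aux
variable {α : Type*}

lemma rtg_decomp (R R' : α → α → Prop) (hR : R' ≤ R) {x y : α}
    (h : Relation.ReflTransGen R x y) :
    Relation.ReflTransGen (fun a b => R a b ∧ ¬ R' a b) x y ∨
      ∃ u v, Relation.ReflTransGen R x u ∧ R' u v ∧ Relation.ReflTransGen R v y := by
  induction h using Relation.ReflTransGen.head_induction_on with
  | refl => exact Or.inl Relation.ReflTransGen.refl
  | head hxz hzy ih =>
    rename_i x' z
    by_cases h' : R' x' z
    · exact Or.inr ⟨x', z, Relation.ReflTransGen.refl, h', hzy⟩
    · rcases ih with p | ⟨u, v, p1, s, p2⟩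
      · exact Or.inl (Relation.ReflTransGen.head ⟨hxz, h'⟩ p)
      · exact Or.inr ⟨u, v, Relation.ReflTransGen.head hxz p1, s, p2⟩

end Aux

/-- Split of a standard DP problem `(P,⊥,⊥,R)` along subrelations `P' ≤ P`, `R' ≤ R`. -/
theorem split_standard_dp {α : Type*} (P P' R R' : α → α → Prop)
    (hP : P' ≤ P) (hR : R' ≤ R)
    (h1 : RelDPFinite P' (fun x y => P x y ∧ ¬ P' x y) R' (fun x y => R x y ∧ ¬ R' x y))
    (h2 : RelDPFinite (fun x y => P x y ∧ ¬ P' x y) ⊥ ⊥ (fun x y => R x y ∧ ¬ R' x y)) :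
    RelDPFinite P ⊥ ⊥ R := by
  rintro ⟨a, b, hab, hchain, _, hsn⟩
  -- pointwise equivalence of R with R' ⊔ (R \ R')
  have hRiff : ∀ x y : α, (R' ⊔ fun x y => R x y ∧ ¬ R' x y) x y ↔ R x y := by
    intro x y
    constructor
    · rintro (h | ⟨h, _⟩); exact hR _ _ h; exact h
    · intro h; by_cases h' : R' x y
      · exact Or.inl h'
      · exact Or.inr ⟨h, h'⟩
  have hchainR : ∀ i, Relation.ReflTransGen R (b i) (a (i + 1)) := by
    intro i
    refine Relation.ReflTransGen.mono ?_ _ _ (hchain i)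
    rintro x y (h | h); exact h.elim; exact h
  have hsnR : ∀ i, SNAt R (b i) := by
    intro i h
    obtain ⟨f, hf0, hf⟩ := h
    exact hsn i ⟨f, hf0, fun j => Or.inr (hf j)⟩
  have habP : ∀ i, P (a i) (b i) := by
    intro i
    rcases hab i with h | h; exact h; exact h.elim
  by_cases hkey : ∀ N, ∃ i, N ≤ i ∧ (P' (a i) (b i) ∨
      ∃ u v, Relation.ReflTransGen R (b i) u ∧ R' u v ∧
        Relation.ReflTransGen R v (a (i + 1)))
  · -- build a chain for h1
    refine h1 ⟨a, b, ?_, ?_, ?_, ?_⟩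
    · intro i
      by_cases h' : P' (a i) (b i)
      · exact Or.inl h'
      · exact Or.inr ⟨habP i, h'⟩
    · intro i
      exact Relation.ReflTransGen.mono (fun x y h => (hRiff x y).2 h) _ _ (hchainR i)
    · intro N
      obtain ⟨i, hiN, h⟩ := hkey N
      refine ⟨i, hiN, ?_⟩
      rcases h with h | ⟨u, v, p1, s, p2⟩
      · exact Or.inl h
      · exact Or.inr ⟨u, v, Relation.ReflTransGen.mono (fun x y h => (hRiff x y).2 h) _ _ p1, s,
          Relation.ReflTransGen.mono (fun x y h => (hRiff x y).2 h) _ _ p2⟩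
    · intro i h
      obtain ⟨f, hf0, hf⟩ := h
      exact hsnR i ⟨f, hf0, fun j => (hRiff _ _).1 (hf j)⟩
  · -- build a chain for h2
    push_neg at hkey
    obtain ⟨N, hN⟩ := hkey
    refine h2 ⟨fun i => a (N + i), fun i => b (N + i), ?_, ?_, ?_, ?_⟩
    · intro i
      have := hN (N + i) (Nat.le_add_right _ _)
      exact Or.inl ⟨habP _, this.1⟩
    · intro i
      have hpath := hchainR (N + i)
      rcases rtg_decomp R R' hR hpath with p | ⟨u, v, p1, s, p2⟩
      · have : N + i + 1 = N + (i + 1) := by omega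
        rw [this] at p
        exact Relation.ReflTransGen.mono (fun x y h => Or.inr h) _ _ p
      · exact ((hN (N + i) (Nat.le_add_right _ _)).2 u v p1 s p2).elim
    · intro M
      refine ⟨M, le_refl _, Or.inl ?_⟩
      have := hN (N + M) (Nat.le_add_right _ _)
      exact ⟨habP _, this.1⟩
    · intro i h
      obtain ⟨f, hf0, hf⟩ := h
      refine hsnR (N + i) ⟨f, hf0, fun j => ?_⟩
      rcases hf j with h | h; exact h.elim; exact h.1
end
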